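/- Let c : ℕ* → ℕ* be any function with c_q ≥ 1 for all q, and set b_q := q³·c_q for each q ≥ 1. Then the double series Σ_{q≥1} Σ_{n∈ℤ} q·c_q·(1 + (|n| + b_q)²)^{−1} converges. -/

import Mathlib

/-- Shifted inverse-square series over `ℕ` is summable. -/
lemma aux_summable_shift (b : ℕ) :
    Summable (fun n : ℕ => (((n : ℝ) + (b : ℝ)) ^ 2)⁻¹) := by
  have h0 : Summable (fun n : ℕ => ((n : ℝ) ^ 2)⁻¹) :=
    Real.summable_nat_pow_inv.mpr (by norm_num)
  have := (summable_nat_add_iff (f := fun n : ℕ => ((n : ℝ) ^ 2)⁻¹) b).mpr h0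
  refine this.congr fun n => ?_
  push_cast
  ring_nf

/-- Tail bound: `∑ (n+b)⁻² ≤ 2/b` for `b ≥ 1`. -/
lemma aux_tail (b : ℕ) (hb : 1 ≤ b) :
    (∑' n : ℕ, (((n : ℝ) + (b : ℝ)) ^ 2)⁻¹) ≤ 2 / (b : ℝ) := by
  refine Summable.tsum_le_of_sum_le (aux_summable_shift b) fun s => ?_
  have hmap : ∑ n ∈ s, (((n : ℝ) + (b : ℝ)) ^ 2)⁻¹
      = ∑ i ∈ s.image (fun n => n + b), ((i : ℝ) ^ 2)⁻¹ := by
    rw [Finset.sum_image (fun x _ y _ h => by simpa using h)]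
    refine Finset.sum_congr rfl fun n _ => by push_cast; ring_nf
  rw [hmap]
  set M := (s.sup id) + b + 1 with hM
  have hsub : s.image (fun n => n + b) ⊆ Finset.Ioo (b - 1) M := by
    intro i hi
    simp only [Finset.mem_image] at hi
    obtain ⟨n, hn, rfl⟩ := hi
    have : n ≤ s.sup id := Finset.le_sup (f := id) hn
    simp only [Finset.mem_Ioo]
    omega
  calc ∑ i ∈ s.image (fun n => n + b), ((i : ℝ) ^ 2)⁻¹
      ≤ ∑ i ∈ Finset.Ioo (b - 1) M, ((i : ℝ) ^ 2)⁻¹ :=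
        Finset.sum_le_sum_of_subset_of_nonneg hsub (fun i _ _ => by positivity)
    _ ≤ 2 / (((b - 1 : ℕ) : ℝ) + 1) := sum_Ioo_inv_sq_le _ _
    _ = 2 / (b : ℝ) := by
        congr 1
        have : ((b - 1 : ℕ) : ℝ) = (b : ℝ) - 1 := by push_cast [hb]; ring
        rw [this]; ring

lemma aux_abs_neg (n : ℕ) : (|(-(n + 1) : ℤ)| : ℝ) = (n : ℝ) + 1 := by
  push_cast
  rw [abs_neg, abs_of_nonneg (by positivity)]

lemma aux_abs_nat (n : ℕ) : (|((n : ℤ))| : ℝ) = (n : ℝ) := by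
  push_cast
  exact abs_of_nonneg (by positivity)

/-- The inner `ℤ`-series is summable. -/
lemma aux_summable_int (b : ℕ) (hb : 1 ≤ b) :
    Summable (fun n : ℤ => (1 + ((|n| : ℝ) + (b : ℝ)) ^ 2)⁻¹) := by
  have hb' : (1 : ℝ) ≤ (b : ℝ) := by exact_mod_cast hb
  refine Summable.of_nat_of_neg_add_one ?_ ?_
  · refine (aux_summable_shift b).of_nonneg_of_le (fun n => by positivity) fun n => ?_
    have h1 : (0:ℝ) < ((n : ℝ) + (b : ℝ)) ^ 2 := by
      nlinarith [Nat.cast_nonneg (α := ℝ) n]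
    rw [aux_abs_nat]
    exact inv_anti₀ h1 (by linarith)
  · refine (aux_summable_shift (b + 1)).of_nonneg_of_le (fun n => by positivity) fun n => ?_
    rw [aux_abs_neg]
    have h1 : (0:ℝ) < ((n : ℝ) + ((b + 1 : ℕ) : ℝ)) ^ 2 := by
      have : (0:ℝ) ≤ (n : ℝ) := Nat.cast_nonneg n
      have h2 : (1 : ℝ) ≤ ((b + 1 : ℕ) : ℝ) := by push_cast; linarith
      nlinarith
    refine inv_anti₀ h1 ?_
    push_cast
    nlinarith [Nat.cast_nonneg (α := ℝ) n]

set_option maxHeartbeats 1000000 in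
/-- The inner `ℤ`-sum is at most `4/b`. -/
lemma aux_tsum_int_le (b : ℕ) (hb : 1 ≤ b) :
    (∑' n : ℤ, (1 + ((|n| : ℝ) + (b : ℝ)) ^ 2)⁻¹) ≤ 4 / (b : ℝ) := by
  have hb' : (1 : ℝ) ≤ (b : ℝ) := by exact_mod_cast hb
  have hbpos : (0:ℝ) < (b : ℝ) := by linarith
  have key : ∀ n : ℕ, (1 + ((|(n : ℤ)| : ℝ) + (b : ℝ)) ^ 2)⁻¹
      ≤ (((n : ℝ) + (b : ℝ)) ^ 2)⁻¹ := by
    intro n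
    have h1 : (0:ℝ) < ((n : ℝ) + (b : ℝ)) ^ 2 := by
      nlinarith [Nat.cast_nonneg (α := ℝ) n]
    rw [aux_abs_nat]
    exact inv_anti₀ h1 (by linarith)
  have keyneg : ∀ n : ℕ, (1 + ((|(-(n + 1) : ℤ)| : ℝ) + (b : ℝ)) ^ 2)⁻¹
      ≤ (((n : ℝ) + ((b + 1 : ℕ) : ℝ)) ^ 2)⁻¹ := by
    intro n
    have h1 : (0:ℝ) < ((n : ℝ) + ((b + 1 : ℕ) : ℝ)) ^ 2 := by
      have : (0:ℝ) ≤ (n : ℝ) := Nat.cast_nonneg n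
      have h2 : (1 : ℝ) ≤ ((b + 1 : ℕ) : ℝ) := by push_cast; linarith
      nlinarith
    rw [aux_abs_neg]
    refine inv_anti₀ h1 ?_
    push_cast
    nlinarith [Nat.cast_nonneg (α := ℝ) n]
  have hpos : Summable (fun n : ℕ => (1 + ((|(n : ℤ)| : ℝ) + (b : ℝ)) ^ 2)⁻¹) :=
    (aux_summable_shift b).of_nonneg_of_le (fun n => by positivity) key
  have hneg : Summable (fun n : ℕ => (1 + ((|(-(n + 1) : ℤ)| : ℝ) + (b : ℝ)) ^ 2)⁻¹) :=
    (aux_summable_shift (b + 1)).of_nonneg_of_le (fun n => by positivity) keyneg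
  rw [tsum_of_nat_of_neg_add_one hpos hneg]
  have t1 : (∑' n : ℕ, (1 + ((|(n : ℤ)| : ℝ) + (b : ℝ)) ^ 2)⁻¹) ≤ 2 / (b : ℝ) :=
    le_trans (Summable.tsum_le_tsum key hpos (aux_summable_shift b)) (aux_tail b hb)
  have t2 : (∑' n : ℕ, (1 + ((|(-(n + 1) : ℤ)| : ℝ) + (b : ℝ)) ^ 2)⁻¹) ≤ 2 / (b : ℝ) := by
    refine le_trans (Summable.tsum_le_tsum keyneg hneg (aux_summable_shift (b + 1))) ?_
    refine (aux_tail (b + 1) (by omega)).trans ?_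
    have h1 : (0:ℝ) < ((b + 1 : ℕ) : ℝ) := by push_cast; linarith
    rw [div_le_div_iff₀ h1 hbpos]
    push_cast
    nlinarith
  refine le_trans (add_le_add t1 t2) ?_
  rw [← add_div]
  norm_num

/-- for any `c : ℕ* → ℕ*`, setting `b_q = q³·c_q`, the double series
`∑_{q ≥ 1} ∑_{n ∈ ℤ} q·c_q·(1 + (|n| + b_q)²)⁻¹` converges (the `p = 2` summability
estimate). -/
theorem summable_p_eq_two (c : ℕ → ℕ) (hc : ∀ q, 1 ≤ q → 1 ≤ c q) :
    Summable (fun x : {q : ℕ // 1 ≤ q} × ℤ =>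
      (x.1.1 : ℝ) * (c x.1.1 : ℝ) *
        (1 + ((|x.2| : ℝ) + (x.1.1 : ℝ) ^ 3 * (c x.1.1 : ℝ)) ^ 2)⁻¹) := by
  have hb : ∀ q : {q : ℕ // 1 ≤ q}, 1 ≤ q.1 ^ 3 * c q.1 := by
    intro q
    have h1 := hc q.1 q.2
    have h2 := q.2
    exact Nat.one_le_iff_ne_zero.mpr (by positivity)
  have hbcast : ∀ q : {q : ℕ // 1 ≤ q},
      ((q.1 ^ 3 * c q.1 : ℕ) : ℝ) = (q.1 : ℝ) ^ 3 * (c q.1 : ℝ) := by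
    intro q; push_cast; ring
  refine (summable_prod_of_nonneg (fun x => by positivity)).mpr ⟨fun q => ?_, ?_⟩
  · -- inner summability
    have := (aux_summable_int (q.1 ^ 3 * c q.1) (hb q)).mul_left ((q.1 : ℝ) * (c q.1 : ℝ))
    refine this.congr fun n => ?_
    rw [hbcast]
  · -- outer summability
    have hsum2 : Summable (fun q : {q : ℕ // 1 ≤ q} => 4 * ((q.1 : ℝ) ^ 2)⁻¹) := by
      have h0 : Summable (fun n : ℕ => ((n : ℝ) ^ 2)⁻¹) :=
        Real.summable_nat_pow_inv.mpr (by norm_num)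
      exact (h0.subtype _).mul_left 4
    refine hsum2.of_nonneg_of_le (fun q => tsum_nonneg fun n => by positivity) fun q => ?_
    have hq1 : (1:ℝ) ≤ (q.1 : ℝ) := by exact_mod_cast q.2
    have hc1 : (1:ℝ) ≤ (c q.1 : ℝ) := by exact_mod_cast hc q.1 q.2
    have hKpos : (0:ℝ) < (q.1 : ℝ) * (c q.1 : ℝ) := by nlinarith
    have heq : (fun n : ℤ => (q.1 : ℝ) * (c q.1 : ℝ) *
        (1 + ((|n| : ℝ) + (q.1 : ℝ) ^ 3 * (c q.1 : ℝ)) ^ 2)⁻¹)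
        = fun n : ℤ => (q.1 : ℝ) * (c q.1 : ℝ) *
            (1 + ((|n| : ℝ) + ((q.1 ^ 3 * c q.1 : ℕ) : ℝ)) ^ 2)⁻¹ := by
      funext n; rw [hbcast]
    calc (∑' n : ℤ, (q.1 : ℝ) * (c q.1 : ℝ) *
            (1 + ((|n| : ℝ) + (q.1 : ℝ) ^ 3 * (c q.1 : ℝ)) ^ 2)⁻¹)
        = (q.1 : ℝ) * (c q.1 : ℝ) *
            ∑' n : ℤ, (1 + ((|n| : ℝ) + ((q.1 ^ 3 * c q.1 : ℕ) : ℝ)) ^ 2)⁻¹ := by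
          rw [heq, tsum_mul_left]
      _ ≤ (q.1 : ℝ) * (c q.1 : ℝ) * (4 / ((q.1 ^ 3 * c q.1 : ℕ) : ℝ)) :=
          mul_le_mul_of_nonneg_left (aux_tsum_int_le _ (hb q)) hKpos.le
      _ = 4 * ((q.1 : ℝ) ^ 2)⁻¹ := by
          rw [hbcast]
          have hq0 : (q.1 : ℝ) ≠ 0 := by linarith
          have hc0 : (c q.1 : ℝ) ≠ 0 := by linarith
          field_simp
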